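/- Let (X, Y) be a random vector with values in ℝ^d × ℝ on a probability space, with E[Y²] < ∞, and let (X^1, Y^1), …, (X^n, Y^n) be i.i.d. copies of (X, Y). Fix x ∈ ℝ^d, r > 0 and M ≥ 0, and assume that E[ Y² · 1{X ∈ A} ] ≤ M λ(A) for every Borel set A contained in the open ball B(x, r). Let K : ℝ^d → ℝ be bounded and measurable with support contained in the closed ball of radius ρ > 0 centered at the origin. Then for every a with 0 < a < r/ρ: Var( n^{−1} Σ_{ℓ=1}^n Y^ℓ · a^{−d} K( (x − X^ℓ)/a ) ) ≤ M ( ∫_{ℝ^d} K(u)² λ(du) ) / ( n a^d ). -/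

import Mathlib

open MeasureTheory ProbabilityTheory

section Aux

variable {Ω : Type*} [MeasurableSpace Ω]

/-- Second moment bound for one kernel-weighted term. -/
lemma nw_second_moment_bound (μ : Measure Ω) [IsProbabilityMeasure μ]
    {d : ℕ} (X : Ω → EuclideanSpace ℝ (Fin d)) (Y : Ω → ℝ)
    (hX : Measurable X) (hY : Measurable Y) (hY2 : MemLp Y 2 μ)
    (x : EuclideanSpace ℝ (Fin d)) (r : ℝ) (hr : 0 < r) (M : ℝ) (hM : 0 ≤ M)
    (hmom : ∀ A : Set (EuclideanSpace ℝ (Fin d)), MeasurableSet A → A ⊆ Metric.ball x r →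
      ∫ ω in X ⁻¹' A, (Y ω) ^ 2 ∂μ ≤ M * (volume A).toReal)
    (K : EuclideanSpace ℝ (Fin d) → ℝ)
    (hKmeas : Measurable K) {B : ℝ} (hKbdd : ∀ u, |K u| ≤ B)
    (ρ : ℝ) (hρ : 0 < ρ) (hKsupp : Function.support K ⊆ Metric.closedBall 0 ρ)
    (a : ℝ) (ha : 0 < a) (har : a * ρ < r) :
    ∫ ω, (Y ω * (a ^ d)⁻¹ * K (a⁻¹ • (x - X ω))) ^ 2 ∂μ
      ≤ M * (∫ u, K u ^ 2) / a ^ d := by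
  have had : (0:ℝ) < a ^ d := pow_pos ha d
  set g : EuclideanSpace ℝ (Fin d) → ℝ := fun u => (K (a⁻¹ • (x - u))) ^ 2 with hg_def
  have hgmeas : Measurable g :=
    (hKmeas.comp (((measurable_const.sub measurable_id).const_smul a⁻¹))).pow_const 2
  have hg_nonneg : ∀ u, 0 ≤ g u := fun u => sq_nonneg _
  have hB0 : 0 ≤ B := le_trans (abs_nonneg _) (hKbdd 0)
  -- support of g
  have hg_supp : Function.support g ⊆ Metric.ball x r := by
    intro u hu
    have hK0 : K (a⁻¹ • (x - u)) ≠ 0 := by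
      intro h0; apply hu; simp [hg_def, h0]
    have hmem := hKsupp hK0
    rw [Metric.mem_closedBall, dist_zero_right, norm_smul] at hmem
    have : ‖x - u‖ ≤ a * ρ := by
      rw [norm_inv, Real.norm_eq_abs, abs_of_pos ha] at hmem
      calc ‖x - u‖ = a * (a⁻¹ * ‖x - u‖) := by field_simp
        _ ≤ a * ρ := by nlinarith [hmem]
    rw [Metric.mem_ball, dist_comm, dist_eq_norm]
    exact lt_of_le_of_lt this har
  -- integrability of g
  have hg_bound : ∀ u, ‖g u‖ ≤ B ^ 2 := by
    intro u
    rw [Real.norm_eq_abs, abs_of_nonneg (hg_nonneg u), hg_def]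
    calc (K (a⁻¹ • (x - u))) ^ 2 = |K (a⁻¹ • (x - u))| ^ 2 := (sq_abs _).symm
      _ ≤ B ^ 2 := by nlinarith [hKbdd (a⁻¹ • (x - u)), abs_nonneg (K (a⁻¹ • (x - u)))]
  have hgint : Integrable g := by
    have hind : (Metric.ball x r).indicator g = g :=
      Set.indicator_eq_self.mpr hg_supp
    rw [← hind]
    refine (integrable_indicator_iff Metric.isOpen_ball.measurableSet).2 ?_
    exact Measure.integrableOn_of_bounded
      (by exact (Metric.isBounded_ball.measure_lt_top).ne)
      hgmeas.aestronglyMeasurable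
      (Filter.Eventually.of_forall hg_bound)
  -- the measure ν
  set ν : Measure (EuclideanSpace ℝ (Fin d)) :=
    (μ.withDensity fun ω => ENNReal.ofReal ((Y ω) ^ 2)).map X with hν_def
  have hY2meas : Measurable fun ω => ENNReal.ofReal ((Y ω) ^ 2) :=
    (hY.pow_const 2).ennreal_ofReal
  have hν_ball : ∀ A : Set (EuclideanSpace ℝ (Fin d)), MeasurableSet A →
      A ⊆ Metric.ball x r → ν A ≤ ENNReal.ofReal M * volume A := by
    intro A hA hAsub
    rw [hν_def, Measure.map_apply hX hA, withDensity_apply _ (hX hA)]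
    have hint : IntegrableOn (fun ω => (Y ω) ^ 2) (X ⁻¹' A) μ :=
      hY2.integrable_sq.integrableOn
    rw [← ofReal_integral_eq_lintegral_ofReal hint
      (Filter.Eventually.of_forall fun ω => sq_nonneg _)]
    calc ENNReal.ofReal (∫ ω in X ⁻¹' A, (Y ω) ^ 2 ∂μ)
        ≤ ENNReal.ofReal (M * (volume A).toReal) :=
          ENNReal.ofReal_le_ofReal (hmom A hA hAsub)
      _ = ENNReal.ofReal M * ENNReal.ofReal ((volume A).toReal) :=
          ENNReal.ofReal_mul hM
      _ ≤ ENNReal.ofReal M * volume A :=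
          mul_le_mul_right ENNReal.ofReal_toReal_le _
  -- the key lintegral bound
  set gE : EuclideanSpace ℝ (Fin d) → ENNReal := fun u => ENNReal.ofReal (g u) with hgE_def
  have hgEmeas : Measurable gE := hgmeas.ennreal_ofReal
  have hgE_supp : Function.support gE ⊆ Metric.ball x r := by
    intro u hu
    apply hg_supp
    intro h0
    apply hu
    simp [hgE_def, h0]
  have hrestr : ν.restrict (Metric.ball x r) ≤
      (ENNReal.ofReal M • volume).restrict (Metric.ball x r) := by
    refine Measure.le_iff.2 fun s hs => ?_
    rw [Measure.restrict_apply hs, Measure.restrict_apply hs, Measure.smul_apply,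
      smul_eq_mul]
    exact hν_ball _ (hs.inter Metric.isOpen_ball.measurableSet)
      Set.inter_subset_right
  have hLbound : ∫⁻ u, gE u ∂ν ≤ ENNReal.ofReal (M * ∫ u, g u) := by
    have hind : (Metric.ball x r).indicator gE = gE :=
      Set.indicator_eq_self.mpr hgE_supp
    calc ∫⁻ u, gE u ∂ν = ∫⁻ u in Metric.ball x r, gE u ∂ν := by
          rw [← lintegral_indicator Metric.isOpen_ball.measurableSet, hind]
      _ ≤ ∫⁻ u in Metric.ball x r, gE u ∂(ENNReal.ofReal M • volume) :=
          lintegral_mono' hrestr le_rfl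
      _ = ENNReal.ofReal M * ∫⁻ u in Metric.ball x r, gE u ∂volume := by
          rw [Measure.restrict_smul, lintegral_smul_measure, smul_eq_mul]
      _ ≤ ENNReal.ofReal M * ∫⁻ u, gE u ∂volume :=
          mul_le_mul_right (lintegral_mono' Measure.restrict_le_self le_rfl) _
      _ = ENNReal.ofReal M * ENNReal.ofReal (∫ u, g u) := by
          rw [← ofReal_integral_eq_lintegral_ofReal hgint
            (Filter.Eventually.of_forall hg_nonneg)]
      _ = ENNReal.ofReal (M * ∫ u, g u) := (ENNReal.ofReal_mul hM).symm
  -- transfer to the integral over Ω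
  have hYgint : Integrable (fun ω => g (X ω) * (Y ω) ^ 2) μ :=
    hY2.integrable_sq.bdd_mul (hgmeas.comp hX).aestronglyMeasurable
      (Filter.Eventually.of_forall fun ω => hg_bound (X ω))
  have hmain : ∫ ω, (Y ω) ^ 2 * g (X ω) ∂μ ≤ M * ∫ u, g u := by
    have hint' : Integrable (fun ω => (Y ω) ^ 2 * g (X ω)) μ := by
      simpa [mul_comm] using hYgint
    rw [integral_eq_lintegral_of_nonneg_ae
      (Filter.Eventually.of_forall fun ω => mul_nonneg (sq_nonneg _) (hg_nonneg _))
      hint'.aestronglyMeasurable]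
    refine ENNReal.toReal_le_of_le_ofReal
      (mul_nonneg hM (integral_nonneg hg_nonneg)) ?_
    calc ∫⁻ ω, ENNReal.ofReal ((Y ω) ^ 2 * g (X ω)) ∂μ
        = ∫⁻ ω, ENNReal.ofReal ((Y ω) ^ 2) * gE (X ω) ∂μ := by
          congr 1; funext ω
          rw [ENNReal.ofReal_mul (sq_nonneg _)]
      _ = ∫⁻ u, gE u ∂ν := by
          rw [hν_def, lintegral_map hgEmeas hX]
          exact (lintegral_withDensity_eq_lintegral_mul μ hY2meas (hgEmeas.comp hX)).symm
      _ ≤ ENNReal.ofReal (M * ∫ u, g u) := hLbound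
  -- change of variables
  have hchg : ∫ u, g u = a ^ d * ∫ u, K u ^ 2 := by
    calc ∫ u, g u = ∫ v, (fun w => (K (a⁻¹ • w)) ^ 2) (x - v) := rfl
      _ = ∫ v, (K (a⁻¹ • v)) ^ 2 :=
          integral_sub_left_eq_self (fun w => (K (a⁻¹ • w)) ^ 2) volume x
      _ = |a ^ Module.finrank ℝ (EuclideanSpace ℝ (Fin d))| • ∫ u, K u ^ 2 :=
          Measure.integral_comp_inv_smul volume (fun w => (K w) ^ 2) a
      _ = a ^ d * ∫ u, K u ^ 2 := by
          rw [finrank_euclideanSpace_fin, abs_of_pos had, smul_eq_mul]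
  -- put everything together
  have heq : ∀ ω, (Y ω * (a ^ d)⁻¹ * K (a⁻¹ • (x - X ω))) ^ 2
      = ((a ^ d)⁻¹) ^ 2 * ((Y ω) ^ 2 * g (X ω)) := by
    intro ω; rw [hg_def]; ring
  calc ∫ ω, (Y ω * (a ^ d)⁻¹ * K (a⁻¹ • (x - X ω))) ^ 2 ∂μ
      = ((a ^ d)⁻¹) ^ 2 * ∫ ω, (Y ω) ^ 2 * g (X ω) ∂μ := by
        simp_rw [heq]; exact integral_const_mul _ _
    _ ≤ ((a ^ d)⁻¹) ^ 2 * (M * ∫ u, g u) :=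
        mul_le_mul_of_nonneg_left hmain (by positivity)
    _ = M * (∫ u, K u ^ 2) / a ^ d := by
        rw [hchg]; field_simp

end Aux

/-- Variance bound for the numerator of the Nadaraya–Watson kernel estimator: for i.i.d.
copies `(X^ℓ, Y^ℓ)` of `(X,Y)` with `E[Y²] < ∞`, a localized second-moment bound
`E[Y² 1{X ∈ A}] ≤ M λ(A)` for Borel `A ⊆ B(x,r)`, and a bounded kernel `K` supported in
the closed ball of radius `ρ`, one has for every `0 < a < r/ρ`:
`Var(n⁻¹ Σ_ℓ Y^ℓ a^{−d} K((x − X^ℓ)/a)) ≤ M (∫ K²) / (n a^d)`. -/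
theorem nadaraya_watson_variance_bound
    {Ω : Type*} [MeasurableSpace Ω] (μ : Measure Ω) [IsProbabilityMeasure μ]
    (d : ℕ) (hd : 1 ≤ d) (n : ℕ) (hn : 1 ≤ n)
    (X : Ω → EuclideanSpace ℝ (Fin d)) (Y : Ω → ℝ)
    (hX : Measurable X) (hY : Measurable Y) (hY2 : MemLp Y 2 μ)
    (Xl : Fin n → Ω → EuclideanSpace ℝ (Fin d)) (Yl : Fin n → Ω → ℝ)
    (hmeas : ∀ ℓ, Measurable (fun ω => (Xl ℓ ω, Yl ℓ ω)))
    (hindep : iIndepFun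
      (fun ℓ ω => (Xl ℓ ω, Yl ℓ ω)) μ)
    (hident : ∀ ℓ : Fin n,
      IdentDistrib (fun ω => (Xl ℓ ω, Yl ℓ ω)) (fun ω => (X ω, Y ω)) μ μ)
    (x : EuclideanSpace ℝ (Fin d)) (r : ℝ) (hr : 0 < r) (M : ℝ) (hM : 0 ≤ M)
    (hmom : ∀ A : Set (EuclideanSpace ℝ (Fin d)), MeasurableSet A → A ⊆ Metric.ball x r →
      ∫ ω in X ⁻¹' A, (Y ω) ^ 2 ∂μ ≤ M * (volume A).toReal)
    (K : EuclideanSpace ℝ (Fin d) → ℝ)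
    (hKmeas : Measurable K) (hKbdd : ∃ B : ℝ, ∀ u, |K u| ≤ B)
    (ρ : ℝ) (hρ : 0 < ρ) (hKsupp : Function.support K ⊆ Metric.closedBall 0 ρ)
    (a : ℝ) (ha : 0 < a) (har : a < r / ρ) :
    variance (fun ω => (n : ℝ)⁻¹ * ∑ ℓ : Fin n,
        Yl ℓ ω * (a ^ d)⁻¹ * K (a⁻¹ • (x - Xl ℓ ω))) μ
      ≤ M * (∫ u, K u ^ 2) / (n * a ^ d) := by
  obtain ⟨B, hB⟩ := hKbdd
  have hB0 : 0 ≤ B := le_trans (abs_nonneg _) (hB 0)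
  have had : (0:ℝ) < a ^ d := pow_pos ha d
  have hn0 : (0:ℝ) < n := by exact_mod_cast hn
  have har' : a * ρ < r := (lt_div_iff₀ hρ).1 har
  set f : EuclideanSpace ℝ (Fin d) × ℝ → ℝ :=
    fun p => p.2 * (a ^ d)⁻¹ * K (a⁻¹ • (x - p.1)) with hf_def
  have hfmeas : Measurable f := by
    refine (measurable_snd.mul measurable_const).mul ?_
    exact hKmeas.comp ((measurable_const.sub measurable_fst).const_smul a⁻¹)
  set Z : Fin n → Ω → ℝ := fun ℓ ω => f (Xl ℓ ω, Yl ℓ ω) with hZ_def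
  set Z0 : Ω → ℝ := fun ω => f (X ω, Y ω) with hZ0_def
  -- Memℒp of Z0
  have hZ0mem : MemLp Z0 2 μ := by
    refine MemLp.of_le_mul (c := (a ^ d)⁻¹ * B) hY2 ?_ (Filter.Eventually.of_forall fun ω => ?_)
    · exact ((hY.mul measurable_const).mul
        (hKmeas.comp ((measurable_const.sub hX).const_smul a⁻¹))).aestronglyMeasurable
    · show ‖Y ω * (a ^ d)⁻¹ * K (a⁻¹ • (x - X ω))‖ ≤ (a ^ d)⁻¹ * B * ‖Y ω‖
      rw [Real.norm_eq_abs, Real.norm_eq_abs, abs_mul, abs_mul,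
        abs_of_pos (inv_pos.2 had)]
      have := hB (a⁻¹ • (x - X ω))
      have h1 : (0:ℝ) ≤ |Y ω| * (a ^ d)⁻¹ := by positivity
      nlinarith [mul_le_mul_of_nonneg_left this h1]
  have hZident : ∀ ℓ, IdentDistrib (Z ℓ) Z0 μ μ := fun ℓ => (hident ℓ).comp hfmeas
  have hZmem : ∀ ℓ, MemLp (Z ℓ) 2 μ := fun ℓ => (hZident ℓ).symm.memLp_snd hZ0mem
  have hZindep : iIndepFun Z μ :=
    hindep.comp (fun _ => f) (fun _ => hfmeas)
  -- variance computation
  have hsum_eq : (fun ω => (n : ℝ)⁻¹ * ∑ ℓ : Fin n,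
      Yl ℓ ω * (a ^ d)⁻¹ * K (a⁻¹ • (x - Xl ℓ ω)))
      = fun ω => (n : ℝ)⁻¹ * (∑ ℓ : Fin n, Z ℓ) ω := by
    funext ω
    simp only [Finset.sum_apply]
    rfl
  have hvar_sum : variance (∑ ℓ : Fin n, Z ℓ) μ = ∑ ℓ : Fin n, variance (Z ℓ) μ :=
    IndepFun.variance_sum (fun ℓ _ => hZmem ℓ)
      (fun i _ j _ hij => hZindep.indepFun hij)
  have hvar_Z0 : ∀ ℓ, variance (Z ℓ) μ = variance Z0 μ := fun ℓ =>
    (hZident ℓ).variance_eq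
  have hZ0bound : variance Z0 μ ≤ M * (∫ u, K u ^ 2) / a ^ d := by
    refine le_trans (variance_le_expectation_sq hZ0mem.aestronglyMeasurable) ?_
    have := nw_second_moment_bound μ X Y hX hY hY2 x r hr M hM hmom K hKmeas hB
      ρ hρ hKsupp a ha har'
    simpa using this
  rw [hsum_eq, variance_const_mul, hvar_sum]
  simp only [hvar_Z0, Finset.sum_const, Finset.card_univ, Fintype.card_fin, nsmul_eq_mul]
  have hvnn : 0 ≤ variance Z0 μ := variance_nonneg _ _
  calc (n : ℝ)⁻¹ ^ 2 * ((n : ℝ) * variance Z0 μ)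
      = (n : ℝ)⁻¹ * variance Z0 μ := by field_simp
    _ ≤ (n : ℝ)⁻¹ * (M * (∫ u, K u ^ 2) / a ^ d) :=
        mul_le_mul_of_nonneg_left hZ0bound (by positivity)
    _ = M * (∫ u, K u ^ 2) / (n * a ^ d) := by field_simp
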